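/- Let f : M → ℝ be bounded, let a > 0 and h ∈ ℝ be such that the family {y ↦ S_t f(y) − h t : t ≥ a} is uniformly bounded and uniformly equicontinuous on M, and define f̄(x) = inf_{t ≥ a} [S_t f(x) − h t]. Then the functions y ↦ S_t f̄(y) − h t converge uniformly on M as t → ∞ to a continuous function f̃ : M → ℝ, and this limit satisfies S_t f̃ = f̃ + h t (as functions on M) for all t > 0. -/

import Mathlib

open Set

section Helpers

private lemma bdd_of_lb {ι : Type*} (F : ι → ℝ) (B : ℝ) (hB : ∀ i, B ≤ F i) :
    BddBelow (Set.range F) := ⟨B, by rintro _ ⟨i, rfl⟩; exact hB i⟩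

private lemma bdda_of_ub {ι : Type*} (F : ι → ℝ) (B : ℝ) (hB : ∀ i, F i ≤ B) :
    BddAbove (Set.range F) := ⟨B, by rintro _ ⟨i, rfl⟩; exact hB i⟩

private lemma myciInf_add {ι : Type*} [Nonempty ι] (F : ι → ℝ) (B : ℝ) (hB : ∀ i, B ≤ F i)
    (k : ℝ) : (⨅ i, F i) + k = ⨅ i, (F i + k) := by
  have hb : BddBelow (Set.range F) := bdd_of_lb F B hB
  have hb2 : BddBelow (Set.range fun i => F i + k) :=
    bdd_of_lb _ (B + k) fun i => add_le_add_left (hB i) k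
  apply le_antisymm
  · exact le_ciInf fun i => add_le_add_left (ciInf_le hb i) k
  · have h1 : (⨅ i, (F i + k)) - k ≤ ⨅ i, F i :=
      le_ciInf fun i => sub_le_iff_le_add.mpr (ciInf_le hb2 i)
    linarith

private lemma myciInf_swap {ι κ : Type*} [Nonempty ι] [Nonempty κ] (F : ι → κ → ℝ) (B : ℝ)
    (hB : ∀ i j, B ≤ F i j) : ⨅ i, ⨅ j, F i j = ⨅ j, ⨅ i, F i j := by
  have h1 : ∀ i, BddBelow (Set.range (F i)) := fun i => bdd_of_lb _ B (hB i)
  have h2 : ∀ j, BddBelow (Set.range fun i => F i j) := fun j => bdd_of_lb _ B fun i => hB i j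
  have h3 : BddBelow (Set.range fun i => ⨅ j, F i j) :=
    bdd_of_lb _ B fun i => le_ciInf (hB i)
  have h4 : BddBelow (Set.range fun j => ⨅ i, F i j) :=
    bdd_of_lb _ B fun j => le_ciInf fun i => hB i j
  apply le_antisymm
  · exact le_ciInf fun j => ciInf_mono h3 fun i => ciInf_le (h1 i) j
  · exact le_ciInf fun i => ciInf_mono h4 fun j => ciInf_le (h2 j) i

private lemma abs_myciInf_le {ι : Type*} [Nonempty ι] (F : ι → ℝ) (B : ℝ)
    (hB : ∀ i, |F i| ≤ B) : |⨅ i, F i| ≤ B := by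
  obtain ⟨i₀⟩ := (inferInstance : Nonempty ι)
  rw [abs_le]
  constructor
  · exact le_ciInf fun i => (abs_le.mp (hB i)).1
  · exact le_trans (ciInf_le (bdd_of_lb F (-B) fun i => (abs_le.mp (hB i)).1) i₀)
      (abs_le.mp (hB i₀)).2

private lemma abs_myciSup_le {ι : Type*} [Nonempty ι] (F : ι → ℝ) (B : ℝ)
    (hB : ∀ i, |F i| ≤ B) : |⨆ i, F i| ≤ B := by
  obtain ⟨i₀⟩ := (inferInstance : Nonempty ι)
  rw [abs_le]
  constructor
  · exact le_trans (abs_le.mp (hB i₀)).1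
      (le_ciSup (bdda_of_ub F B fun i => (abs_le.mp (hB i)).2) i₀)
  · exact ciSup_le fun i => (abs_le.mp (hB i)).2

private lemma abs_myciInf_sub_le {ι : Type*} [Nonempty ι] (F G : ι → ℝ) (B : ℝ)
    (hF : ∀ i, B ≤ F i) (hG : ∀ i, B ≤ G i) (ε : ℝ) (hfg : ∀ i, |F i - G i| ≤ ε) :
    |(⨅ i, F i) - ⨅ i, G i| ≤ ε := by
  have hbF := bdd_of_lb F B hF
  have hbG := bdd_of_lb G B hG
  rw [abs_le]
  constructor
  · have : (⨅ i, G i) - ε ≤ ⨅ i, F i := le_ciInf fun i => by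
      have h1 := ciInf_le hbG i
      have h2 := abs_le.mp (hfg i)
      linarith [h2.1]
    linarith
  · have : (⨅ i, F i) - ε ≤ ⨅ i, G i := le_ciInf fun i => by
      have h1 := ciInf_le hbF i
      have h2 := abs_le.mp (hfg i)
      linarith [h2.2]
    linarith

private lemma abs_myciSup_sub_le {ι : Type*} [Nonempty ι] (F G : ι → ℝ) (B : ℝ)
    (hF : ∀ i, F i ≤ B) (hG : ∀ i, G i ≤ B) (ε : ℝ) (hε : 0 ≤ ε)
    (hfg : ∀ i, |F i - G i| ≤ ε) :
    |(⨆ i, F i) - ⨆ i, G i| ≤ ε := by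
  have hbF := bdda_of_ub F B hF
  have hbG := bdda_of_ub G B hG
  rw [abs_le]
  constructor
  · have : (⨆ i, G i) ≤ (⨆ i, F i) + ε := ciSup_le fun i => by
      have h1 := le_ciSup hbF i
      have h2 := abs_le.mp (hfg i)
      linarith [h2.1]
    linarith
  · have : (⨆ i, F i) ≤ (⨆ i, G i) + ε := ciSup_le fun i => by
      have h1 := le_ciSup hbG i
      have h2 := abs_le.mp (hfg i)
      linarith [h2.2]
    linarith

end Helpers


private noncomputable def LO {M : Type*} [Nonempty M] (c : ℝ → M → M → ℝ) (g : M → ℝ)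
    (t : ℝ) (y : M) : ℝ := ⨅ x : M, (c t x y + g x)

private noncomputable def Ufun {M : Type*} [Nonempty M] (c : ℝ → M → M → ℝ) (f : M → ℝ)
    (h : ℝ) (t : ℝ) (y : M) : ℝ := (⨅ x : M, (c t x y + f x)) - h * t

private noncomputable def Gfun {M : Type*} [Nonempty M] (c : ℝ → M → M → ℝ) (f : M → ℝ)
    (h a : ℝ) (s : ℝ) (y : M) : ℝ := ⨅ r : Set.Ici a, Ufun c f h (r.1 + s) y

private lemma cost_bound {M : Type*} [MetricSpace M] [CompactSpace M] [Nonempty M]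
    (c : ℝ → M → M → ℝ)
    (hc : ContinuousOn (fun p : ℝ × M × M => c p.1 p.2.1 p.2.2) {p | 0 < p.1})
    (t : ℝ) (ht : 0 < t) : ∃ K, ∀ x y, |c t x y| ≤ K := by
  have hcont : Continuous fun p : M × M => c t p.1 p.2 := by
    have heq : (fun p : M × M => c t p.1 p.2) =
        (fun q : ℝ × M × M => c q.1 q.2.1 q.2.2) ∘ (fun p : M × M => (t, p)) := rfl
    rw [heq]
    exact hc.comp_continuous (by fun_prop) fun p => ht
  obtain ⟨K, hK⟩ := (isCompact_univ : IsCompact (Set.univ : Set (M × M))).exists_bound_of_continuousOn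
    hcont.continuousOn
  exact ⟨K, fun x y => by simpa [Real.norm_eq_abs] using hK (x, y) (Set.mem_univ _)⟩

private lemma LO_abs_le {M : Type*} [Nonempty M] (c : ℝ → M → M → ℝ) (g : M → ℝ)
    (t : ℝ) (K Cg : ℝ) (hK : ∀ x y, |c t x y| ≤ K) (hg : ∀ x, |g x| ≤ Cg) (y : M) :
    |LO c g t y| ≤ K + Cg := by
  apply abs_myciInf_le
  intro x
  calc |c t x y + g x| ≤ |c t x y| + |g x| := abs_add_le _ _
    _ ≤ K + Cg := add_le_add (hK x y) (hg x)

private lemma LO_le_of_le {M : Type*} [Nonempty M] (c : ℝ → M → M → ℝ) (g₁ g₂ : M → ℝ)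
    (t : ℝ) (K C₁ : ℝ) (hK : ∀ x y, |c t x y| ≤ K) (hg₁ : ∀ x, |g₁ x| ≤ C₁)
    (ε : ℝ) (h12 : ∀ x, g₁ x ≤ g₂ x + ε) (y : M) :
    LO c g₁ t y ≤ LO c g₂ t y + ε := by
  have hb : BddBelow (Set.range fun x => c t x y + g₁ x) :=
    bdd_of_lb _ (-(K + C₁)) fun x => by
      have h1 := abs_le.mp (hK x y); have h2 := abs_le.mp (hg₁ x)
      show -(K + C₁) ≤ c t x y + g₁ x
      linarith [h1.1, h2.1]
  have : LO c g₁ t y - ε ≤ ⨅ x, (c t x y + g₂ x) := le_ciInf fun x => by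
    have h1 : LO c g₁ t y ≤ c t x y + g₁ x := ciInf_le hb x
    have h2 := h12 x
    linarith
  simp only [LO] at this ⊢
  linarith

private lemma LO_semigroup {M : Type*} [Nonempty M] (c : ℝ → M → M → ℝ)
    (hdpp : ∀ s t : ℝ, 0 < s → 0 < t → ∀ x y : M,
      c (s + t) x y = ⨅ z : M, (c s x z + c t z y))
    (r t : ℝ) (hr : 0 < r) (ht : 0 < t)
    (Kr Kt : ℝ) (hKr : ∀ x y, |c r x y| ≤ Kr) (hKt : ∀ x y, |c t x y| ≤ Kt)
    (g : M → ℝ) (Cg : ℝ) (hg : ∀ x, |g x| ≤ Cg) (y : M) :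
    LO c g (r + t) y = LO c (fun z => LO c g r z) t y := by
  have lbr : ∀ x z, -Kr ≤ c r x z := fun x z => (abs_le.mp (hKr x z)).1
  have lbt : ∀ z w, -Kt ≤ c t z w := fun z w => (abs_le.mp (hKt z w)).1
  have lbg : ∀ x, -Cg ≤ g x := fun x => (abs_le.mp (hg x)).1
  calc LO c g (r + t) y
      = ⨅ x : M, ((⨅ z : M, (c r x z + c t z y)) + g x) := by
        simp only [LO]
        exact iInf_congr fun x => by rw [hdpp r t hr ht x y]
    _ = ⨅ x : M, ⨅ z : M, ((c r x z + c t z y) + g x) :=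
        iInf_congr fun x =>
          myciInf_add (fun z => c r x z + c t z y) (-(Kr + Kt))
            (fun z => show -(Kr + Kt) ≤ c r x z + c t z y by linarith [lbr x z, lbt z y]) (g x)
    _ = ⨅ z : M, ⨅ x : M, ((c r x z + c t z y) + g x) :=
        myciInf_swap (fun x z => (c r x z + c t z y) + g x) (-(Kr + Kt + Cg))
          (fun x z => show -(Kr + Kt + Cg) ≤ (c r x z + c t z y) + g x by
            linarith [lbr x z, lbt z y, lbg x])
    _ = ⨅ z : M, (c t z y + ⨅ x : M, (c r x z + g x)) := by
        refine iInf_congr fun z => ?_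
        have e1 : (⨅ x : M, ((c r x z + c t z y) + g x)) =
            ⨅ x : M, ((c r x z + g x) + c t z y) := iInf_congr fun x => by ring
        rw [e1, ← myciInf_add (fun x => c r x z + g x) (-(Kr + Cg))
          (fun x => show -(Kr + Cg) ≤ c r x z + g x by linarith [lbr x z, lbg x]) (c t z y),
          add_comm]
    _ = LO c (fun z => LO c g r z) t y := rfl

private noncomputable def Ftil {M : Type*} [Nonempty M] (c : ℝ → M → M → ℝ) (f : M → ℝ)
    (h a : ℝ) (y : M) : ℝ := ⨆ s : Set.Ici (1 : ℝ), Gfun c f h a s.1 y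

/-- **Convergence of the Lax–Oleinik semigroup** (Theorem `wKAMS`): on a compact metric
space `M` with continuous cost `c` satisfying the dynamic programming identity, if `f`
is bounded and the family `{y ↦ S_t f(y) − h t : t ≥ a}` is uniformly bounded and
uniformly equicontinuous, then with `f̄(x) = inf_{t ≥ a} (S_t f(x) − h t)`, the functions
`y ↦ S_t f̄(y) − h t` converge uniformly as `t → ∞` to a continuous function `f̃`
satisfying `S_t f̃ = f̃ + h t` for all `t > 0`. Here `S_t f (y) = inf_x (c_t(x,y) + f(x))`. -/
theorem laxOleinik_uniform_convergence
    (M : Type*) [MetricSpace M] [CompactSpace M] [Nonempty M]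
    (c : ℝ → M → M → ℝ)
    (hc : ContinuousOn (fun p : ℝ × M × M => c p.1 p.2.1 p.2.2) {p | 0 < p.1})
    (hdpp : ∀ s t : ℝ, 0 < s → 0 < t → ∀ x y : M,
      c (s + t) x y = ⨅ z : M, (c s x z + c t z y))
    (f : M → ℝ) (hf : ∃ C, ∀ x, |f x| ≤ C)
    (a : ℝ) (ha : 0 < a) (h : ℝ)
    (hbd : ∃ C : ℝ, ∀ t : ℝ, a ≤ t → ∀ y : M,
        |(⨅ x : M, (c t x y + f x)) - h * t| ≤ C)
    (heq : ∀ ε > 0, ∃ δ > 0, ∀ t : ℝ, a ≤ t → ∀ y₁ y₂ : M, dist y₁ y₂ < δ →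
        |(⨅ x : M, (c t x y₁ + f x)) - (⨅ x : M, (c t x y₂ + f x))| < ε)
    (fbar : M → ℝ)
    (hfbar : ∀ x : M, fbar x = ⨅ t : Set.Ici a, ((⨅ z : M, (c t.1 z x + f z)) - h * t.1)) :
    ∃ ftil : M → ℝ, Continuous ftil ∧
      TendstoUniformly (fun (t : ℝ) (y : M) => (⨅ x : M, (c t x y + fbar x)) - h * t)
        ftil Filter.atTop ∧
      ∀ t : ℝ, 0 < t → ∀ y : M, (⨅ x : M, (c t x y + ftil x)) = ftil y + h * t := by
  classical
  obtain ⟨C, hC⟩ := hbd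
  obtain ⟨Cf, hCf⟩ := hf
  haveI hne : Nonempty ↥(Set.Ici a) := ⟨⟨a, Set.self_mem_Ici⟩⟩
  haveI hne1 : Nonempty ↥(Set.Ici (1 : ℝ)) := ⟨⟨1, Set.self_mem_Ici⟩⟩
  have hU : ∀ t, a ≤ t → ∀ y, |Ufun c f h t y| ≤ C := fun t ht y => by
    simpa only [Ufun] using hC t ht y
  have hcb : ∀ t, 0 < t → ∃ K, ∀ x y, |c t x y| ≤ K := fun t ht => cost_bound c hc t ht
  have hGb : ∀ s, 0 ≤ s → ∀ y, |Gfun c f h a s y| ≤ C := fun s hs y =>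
    abs_myciInf_le _ C fun r => hU _ (by linarith [Set.mem_Ici.mp r.2]) y
  have hGmono : ∀ s₁ s₂, 0 ≤ s₁ → s₁ ≤ s₂ → ∀ y,
      Gfun c f h a s₁ y ≤ Gfun c f h a s₂ y := by
    intro s₁ s₂ hs₁ hss y
    refine le_ciInf fun r => ?_
    have hb : BddBelow (Set.range fun r : Set.Ici a => Ufun c f h (r.1 + s₁) y) :=
      bdd_of_lb _ (-C) fun r => (abs_le.mp (hU _ (by linarith [Set.mem_Ici.mp r.2]) y)).1
    calc Gfun c f h a s₁ y ≤ Ufun c f h ((r.1 + (s₂ - s₁)) + s₁) y :=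
          ciInf_le hb ⟨r.1 + (s₂ - s₁), by
            simp only [Set.mem_Ici]; linarith [Set.mem_Ici.mp r.2]⟩
      _ = Ufun c f h (r.1 + s₂) y := by
          rw [show (r.1 + (s₂ - s₁)) + s₁ = r.1 + s₂ from by ring]
  have hfbarG : ∀ x, fbar x = Gfun c f h a 0 x := fun x => by
    rw [hfbar x]
    simp only [Gfun, Ufun, add_zero]
  have hfbarb : ∀ x, |fbar x| ≤ C := fun x => by
    rw [hfbarG x]; exact hGb 0 le_rfl x
  have hKey : ∀ s, 0 < s → ∀ y, LO c fbar s y = Gfun c f h a s y + h * s := by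
    intro s hs y
    obtain ⟨Ks, hKs⟩ := hcb s hs
    have lbs : ∀ x z, -Ks ≤ c s x z := fun x z => (abs_le.mp (hKs x z)).1
    have lbU : ∀ (r : Set.Ici a) (x : M), -C ≤ Ufun c f h r.1 x := fun r x =>
      (abs_le.mp (hU r.1 (Set.mem_Ici.mp r.2) x)).1
    calc LO c fbar s y
        = ⨅ x : M, (c s x y + ⨅ r : Set.Ici a, Ufun c f h r.1 x) := by
          simp only [LO]
          exact iInf_congr fun x => by rw [hfbar x]; simp only [Ufun]
      _ = ⨅ x : M, ⨅ r : Set.Ici a, (c s x y + Ufun c f h r.1 x) := by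
          refine iInf_congr fun x => ?_
          rw [add_comm, myciInf_add (fun r : Set.Ici a => Ufun c f h r.1 x) (-C)
            (fun r => lbU r x) (c s x y)]
          exact iInf_congr fun r => add_comm _ _
      _ = ⨅ r : Set.Ici a, ⨅ x : M, (c s x y + Ufun c f h r.1 x) :=
          myciInf_swap (fun x (r : Set.Ici a) => c s x y + Ufun c f h r.1 x) (-(Ks + C))
            (fun x r => show -(Ks + C) ≤ c s x y + Ufun c f h r.1 x by
              linarith [lbs x y, lbU r x])
      _ = ⨅ r : Set.Ici a, (LO c (LO c f r.1) s y + (-(h * r.1))) := by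
          refine iInf_congr fun r => ?_
          have hb : ∀ x : M, -(Ks + C) + h * r.1 ≤ c s x y + LO c f r.1 x := fun x => by
            have e : LO c f r.1 x = Ufun c f h r.1 x + h * r.1 := by
              simp only [LO, Ufun]; ring
            rw [e]; linarith [lbs x y, lbU r x]
          calc ⨅ x : M, (c s x y + Ufun c f h r.1 x)
              = ⨅ x : M, ((c s x y + LO c f r.1 x) + (-(h * r.1))) :=
                iInf_congr fun x => by simp only [Ufun, LO]; ring
            _ = (⨅ x : M, (c s x y + LO c f r.1 x)) + (-(h * r.1)) :=
                (myciInf_add _ (-(Ks + C) + h * r.1) hb _).symm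
            _ = LO c (LO c f r.1) s y + (-(h * r.1)) := rfl
      _ = ⨅ r : Set.Ici a, (Ufun c f h (r.1 + s) y + h * s) := by
          refine iInf_congr fun r => ?_
          have hr : 0 < r.1 := lt_of_lt_of_le ha (Set.mem_Ici.mp r.2)
          obtain ⟨Kr, hKr⟩ := hcb r.1 hr
          rw [← LO_semigroup c hdpp r.1 s hr hs Kr Ks hKr hKs f Cf hCf y]
          simp only [Ufun, LO]; ring
      _ = Gfun c f h a s y + h * s := by
          simp only [Gfun]
          exact (myciInf_add (fun r : Set.Ici a => Ufun c f h (r.1 + s) y) (-C)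
            (fun r => (abs_le.mp (hU _ (by linarith [Set.mem_Ici.mp r.2]) y)).1)
            (h * s)).symm
  have hKey2 : ∀ s t, 0 < s → 0 < t → ∀ y,
      LO c (fun x => Gfun c f h a s x) t y = Gfun c f h a (s + t) y + h * t := by
    intro s t hs ht y
    obtain ⟨Ks, hKs⟩ := hcb s hs
    obtain ⟨Kt, hKt⟩ := hcb t ht
    have hfb : ∀ x, |LO c fbar s x| ≤ Ks + C := fun x =>
      LO_abs_le c fbar s Ks C hKs hfbarb x
    have e1 : LO c (fun x => Gfun c f h a s x) t y
        = ⨅ x : M, ((c t x y + LO c fbar s x) + (-(h * s))) := by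
      show (⨅ x : M, (c t x y + Gfun c f h a s x)) = _
      refine iInf_congr fun x => ?_
      rw [hKey s hs x]; ring
    rw [e1, ← myciInf_add (fun x => c t x y + LO c fbar s x) (-(Kt + (Ks + C)))
      (fun x => show -(Kt + (Ks + C)) ≤ c t x y + LO c fbar s x by
        linarith [(abs_le.mp (hKt x y)).1, (abs_le.mp (hfb x)).1]) (-(h * s))]
    have e2 : (⨅ x : M, (c t x y + LO c fbar s x)) = LO c fbar (s + t) y := by
      rw [LO_semigroup c hdpp s t hs ht Ks Kt hKs hKt fbar C hfbarb y]; rfl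
    rw [e2, hKey (s + t) (by linarith) y]
    ring
  have hGFT : ∀ s, 1 ≤ s → ∀ y, Gfun c f h a s y ≤ Ftil c f h a y := by
    intro s hs y
    have hb : BddAbove (Set.range fun s' : Set.Ici (1 : ℝ) => Gfun c f h a s'.1 y) :=
      bdda_of_ub _ C fun s' =>
        (abs_le.mp (hGb s'.1 (le_trans zero_le_one (Set.mem_Ici.mp s'.2)) y)).2
    exact le_ciSup hb (⟨s, hs⟩ : Set.Ici (1 : ℝ))
  have hFTb : ∀ y, |Ftil c f h a y| ≤ C := fun y => by
    show |⨆ s' : Set.Ici (1 : ℝ), Gfun c f h a s'.1 y| ≤ C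
    exact abs_myciSup_le (fun s' : Set.Ici (1 : ℝ) => Gfun c f h a s'.1 y) C
      fun s' => hGb s'.1 (le_trans zero_le_one (Set.mem_Ici.mp s'.2)) y
  have hUeq : ∀ ε, 0 < ε → ∃ δ, 0 < δ ∧ ∀ t, a ≤ t → ∀ y₁ y₂ : M, dist y₁ y₂ < δ →
      |Ufun c f h t y₁ - Ufun c f h t y₂| ≤ ε := by
    intro ε hε
    obtain ⟨δ, hδ, hδ2⟩ := heq ε hε
    exact ⟨δ, hδ, fun t ht y₁ y₂ hd => by
      simp only [Ufun, sub_sub_sub_cancel_right]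
      exact (hδ2 t ht y₁ y₂ hd).le⟩
  have hGeq : ∀ ε, 0 < ε → ∃ δ, 0 < δ ∧ ∀ s, 0 ≤ s → ∀ y₁ y₂ : M, dist y₁ y₂ < δ →
      |Gfun c f h a s y₁ - Gfun c f h a s y₂| ≤ ε := by
    intro ε hε
    obtain ⟨δ, hδ, hδ2⟩ := hUeq ε hε
    refine ⟨δ, hδ, fun s hs y₁ y₂ hd => ?_⟩
    simp only [Gfun]
    exact abs_myciInf_sub_le _ _ (-C)
      (fun r => (abs_le.mp (hU _ (by linarith [Set.mem_Ici.mp r.2]) y₁)).1)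
      (fun r => (abs_le.mp (hU _ (by linarith [Set.mem_Ici.mp r.2]) y₂)).1)
      ε (fun r => hδ2 _ (by linarith [Set.mem_Ici.mp r.2]) y₁ y₂ hd)
  have hFTeq : ∀ ε, 0 < ε → ∃ δ, 0 < δ ∧ ∀ y₁ y₂ : M, dist y₁ y₂ < δ →
      |Ftil c f h a y₁ - Ftil c f h a y₂| ≤ ε := by
    intro ε hε
    obtain ⟨δ, hδ, hδ2⟩ := hGeq ε hε
    refine ⟨δ, hδ, fun y₁ y₂ hd => ?_⟩
    show |(⨆ s' : Set.Ici (1 : ℝ), Gfun c f h a s'.1 y₁) -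
        ⨆ s' : Set.Ici (1 : ℝ), Gfun c f h a s'.1 y₂| ≤ ε
    exact abs_myciSup_sub_le (fun s' : Set.Ici (1 : ℝ) => Gfun c f h a s'.1 y₁)
      (fun s' : Set.Ici (1 : ℝ) => Gfun c f h a s'.1 y₂) C
      (fun s' => (abs_le.mp (hGb s'.1 (le_trans zero_le_one (Set.mem_Ici.mp s'.2)) y₁)).2)
      (fun s' => (abs_le.mp (hGb s'.1 (le_trans zero_le_one (Set.mem_Ici.mp s'.2)) y₂)).2)
      ε hε.le
      (fun s' => hδ2 s'.1 (le_trans zero_le_one (Set.mem_Ici.mp s'.2)) y₁ y₂ hd)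
  have hFTcont : Continuous (Ftil c f h a) := by
    rw [Metric.continuous_iff]
    intro b ε hε
    obtain ⟨δ, hδ, hδ2⟩ := hFTeq (ε / 2) (by linarith)
    exact ⟨δ, hδ, fun x hx => by
      rw [Real.dist_eq]
      exact lt_of_le_of_lt (hδ2 x b hx) (by linarith)⟩
  have huc : ∀ ε, 0 < ε → ∃ s₀, 1 ≤ s₀ ∧ ∀ s, s₀ ≤ s → ∀ y,
      Ftil c f h a y - Gfun c f h a s y ≤ ε := by
    intro ε hε
    obtain ⟨δ, hδ, hδ2⟩ := hGeq (ε / 4) (by linarith)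
    obtain ⟨δ', hδ', hδ2'⟩ := hFTeq (ε / 4) (by linarith)
    have hδ₀pos : 0 < min δ δ' := lt_min hδ hδ'
    have hpt : ∀ i : M, ∃ s : ℝ, 1 ≤ s ∧ Ftil c f h a i - Gfun c f h a s i ≤ ε / 4 := by
      intro i
      have hlt : Ftil c f h a i - ε / 4 < ⨆ s : Set.Ici (1 : ℝ), Gfun c f h a s.1 i := by
        simp only [Ftil]
        linarith
      obtain ⟨s', hs'⟩ := exists_lt_of_lt_ciSup hlt
      exact ⟨s'.1, Set.mem_Ici.mp s'.2, by linarith⟩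
    choose sel hsel1 hsel2 using hpt
    obtain ⟨I, hI⟩ := isCompact_univ.elim_finite_subcover
      (fun i : M => Metric.ball i (min δ δ')) (fun i => Metric.isOpen_ball)
      (fun y _ => Set.mem_iUnion.mpr ⟨y, Metric.mem_ball_self hδ₀pos⟩)
    have hIne : I.Nonempty := by
      obtain ⟨y⟩ := (inferInstance : Nonempty M)
      obtain ⟨i, hi, _⟩ := Set.mem_iUnion₂.mp (hI (Set.mem_univ y))
      exact ⟨i, hi⟩
    refine ⟨max 1 (I.sup' hIne sel), le_max_left _ _, fun s hs y => ?_⟩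
    obtain ⟨i, hiI, hyi⟩ := Set.mem_iUnion₂.mp (hI (Set.mem_univ y))
    have hdist : dist y i < min δ δ' := hyi
    have h1 := abs_le.mp (hδ2' y i (lt_of_lt_of_le hdist (min_le_right _ _)))
    have hs1 : (1:ℝ) ≤ s := le_trans (le_max_left _ _) hs
    have hsi : sel i ≤ s := le_trans (le_trans (Finset.le_sup' sel hiI) (le_max_right _ _)) hs
    have h2 : Gfun c f h a (sel i) i ≤ Gfun c f h a s i :=
      hGmono (sel i) s (by linarith [hsel1 i]) hsi i
    have h3 := abs_le.mp (hδ2 s (by linarith) i y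
      (by rw [dist_comm]; exact lt_of_lt_of_le hdist (min_le_left _ _)))
    have h4 := hsel2 i
    linarith [h1.1, h1.2, h3.1, h3.2]
  refine ⟨Ftil c f h a, hFTcont, ?_, ?_⟩
  · rw [Metric.tendstoUniformly_iff]
    intro ε hε
    obtain ⟨s₀, hs₀1, hs₀⟩ := huc (ε / 2) (by linarith)
    filter_upwards [Filter.eventually_ge_atTop s₀] with s hs
    intro y
    have hspos : 0 < s := by linarith
    have hle : Gfun c f h a s y ≤ Ftil c f h a y := hGFT s (by linarith) y
    have hd := hs₀ s hs y
    rw [Real.dist_eq]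
    have e : (⨅ x : M, (c s x y + fbar x)) - h * s = Gfun c f h a s y := by
      have := hKey s hspos y; simp only [LO] at this; linarith
    rw [e, abs_of_nonneg (by linarith : (0:ℝ) ≤ Ftil c f h a y - Gfun c f h a s y)]
    linarith
  · intro t ht y
    have hzero : ∀ ε, 0 < ε → |(⨅ x : M, (c t x y + Ftil c f h a x)) - (Ftil c f h a y + h * t)| ≤ ε := by
      intro ε hε
      obtain ⟨Kt, hKt⟩ := hcb t ht
      obtain ⟨s₀, hs₀1, hs₀⟩ := huc (ε / 2) (by linarith)
      have hs₀pos : (0:ℝ) < s₀ := by linarith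
      have hdiff : ∀ x, |Ftil c f h a x - Gfun c f h a s₀ x| ≤ ε / 2 := fun x => by
        rw [abs_of_nonneg (sub_nonneg.mpr (hGFT s₀ hs₀1 x))]
        exact hs₀ s₀ le_rfl x
      have hb1 : LO c (Ftil c f h a) t y ≤ LO c (fun x => Gfun c f h a s₀ x) t y + ε / 2 :=
        LO_le_of_le c (Ftil c f h a) _ t Kt C hKt hFTb (ε / 2)
          (fun x => by have := abs_le.mp (hdiff x); linarith [this.2]) y
      have hb2 : LO c (fun x => Gfun c f h a s₀ x) t y ≤ LO c (Ftil c f h a) t y + ε / 2 :=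
        LO_le_of_le c _ (Ftil c f h a) t Kt C hKt (fun x => hGb s₀ (by linarith) x) (ε / 2)
          (fun x => by have := abs_le.mp (hdiff x); linarith [this.1]) y
      have hk2 := hKey2 s₀ t hs₀pos ht y
      have h5 : Ftil c f h a y - Gfun c f h a (s₀ + t) y ≤ ε / 2 := hs₀ (s₀ + t) (by linarith) y
      have h6 : Gfun c f h a (s₀ + t) y ≤ Ftil c f h a y := hGFT (s₀ + t) (by linarith) y
      rw [show (⨅ x : M, (c t x y + Ftil c f h a x)) = LO c (Ftil c f h a) t y from rfl, abs_le]
      constructor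
      · linarith
      · linarith
    by_contra hcon
    have habs : 0 < |(⨅ x : M, (c t x y + Ftil c f h a x)) - (Ftil c f h a y + h * t)| :=
      abs_pos.mpr (sub_ne_zero.mpr hcon)
    linarith [hzero (|(⨅ x : M, (c t x y + Ftil c f h a x)) - (Ftil c f h a y + h * t)| / 2) (by linarith)]
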